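/- Consider the CFI gadget on three vertex pairs P_i = {v_i, v'_i}, P_j = {v_j, v'_j}, P_k = {v_k, v'_k} with four middle vertices f_{00}, f_{01}, f_{10}, f_{11}, where f_{ab} is adjacent to the a-th vertex of P_i and the b-th vertex of P_j, and v_k is adjacent to f_{00}, f_{11} while v'_k is adjacent to f_{01}, f_{10}. Then every color-preserving automorphism of this gadget (colors: P_i, P_j, P_k, F = {f_{00},f_{01},f_{10},f_{11}} are color classes) flips either none or exactly two of the three pairs P_i, P_j, P_k. -/

import Mathlib

open Finset

/-- Vertices of the CFI gadget: `Sum.inl (t, x)` is the `x`-th vertex of the pair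
`P_t` (`t = 0, 1, 2` for `P_i, P_j, P_k`), and `Sum.inr (a, b)` is the middle
vertex `f_{ab}`. -/
abbrev CFIVertex : Type := (Fin 3 × Fin 2) ⊕ (Fin 2 × Fin 2)

/-- The CFI gadget graph: `f_{ab}` is adjacent to the `a`-th vertex of `P_i` and
the `b`-th vertex of `P_j`; `v_k` (index 0 in `P_k`) is adjacent to `f_{00}, f_{11}`
and `v'_k` (index 1) to `f_{01}, f_{10}`. -/
def CFIGraph : SimpleGraph CFIVertex :=
  SimpleGraph.fromRel (fun u v =>
    match u, v with
    | Sum.inr (a, b), Sum.inl (t, x) =>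
        (t = 0 ∧ x = a) ∨ (t = 1 ∧ x = b) ∨
        (t = 2 ∧ ((x = 0 ∧ a = b) ∨ (x = 1 ∧ a ≠ b)))
    | _, _ => False)

/-- The coloring: each pair `P_t` is a color class, and `F` is a color class. -/
def CFIColor : CFIVertex → Fin 4
  | Sum.inl (t, _) => t.castSucc
  | Sum.inr _ => 3

/-- Every color-preserving automorphism of the CFI gadget flips either none or
exactly two of the three pairs `P_i, P_j, P_k`. -/
theorem cfi_automorphism_flips_even
    (σ : Equiv.Perm CFIVertex)
    (hadj : ∀ u v : CFIVertex, CFIGraph.Adj (σ u) (σ v) ↔ CFIGraph.Adj u v)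
    (hcol : ∀ v : CFIVertex, CFIColor (σ v) = CFIColor v) :
    (univ.filter fun t : Fin 3 =>
        σ (Sum.inl (t, 0)) = Sum.inl (t, 1)).card = 0 ∨
    (univ.filter fun t : Fin 3 =>
        σ (Sum.inl (t, 0)) = Sum.inl (t, 1)).card = 2 := by
  have hinl : ∀ t : Fin 3, ∀ x : Fin 2, ∃ y, σ (Sum.inl (t, x)) = Sum.inl (t, y) := by
    intro t x
    have h := hcol (Sum.inl (t, x))
    rcases hσ : σ (Sum.inl (t, x)) with ⟨s, y⟩ | p
    · rw [hσ] at h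
      simp [CFIColor] at h
      exact ⟨y, by rw [h]⟩
    · rw [hσ] at h
      simp [CFIColor] at h
      exact absurd h (by fin_cases t <;> decide)
  have hinr : ∃ q : Fin 2 × Fin 2, σ (Sum.inr (0, 0)) = Sum.inr q := by
    have h := hcol (Sum.inr (0, 0))
    rcases hσ : σ (Sum.inr (0, 0)) with ⟨s, y⟩ | p
    · rw [hσ] at h
      simp [CFIColor] at h
      exact absurd h (by fin_cases s <;> decide)
    · exact ⟨p, rfl⟩
  obtain ⟨y0, h0⟩ := hinl 0 0
  obtain ⟨y1, h1⟩ := hinl 1 0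
  obtain ⟨y2, h2⟩ := hinl 2 0
  obtain ⟨⟨a, b⟩, hf⟩ := hinr
  have hA : CFIGraph.Adj (Sum.inr (a, b)) (Sum.inl (0, y0)) := by
    rw [← hf, ← h0, hadj]
    simp [CFIGraph, SimpleGraph.fromRel_adj]
  have hB : CFIGraph.Adj (Sum.inr (a, b)) (Sum.inl (1, y1)) := by
    rw [← hf, ← h1, hadj]
    simp [CFIGraph, SimpleGraph.fromRel_adj]
  have hC : CFIGraph.Adj (Sum.inr (a, b)) (Sum.inl (2, y2)) := by
    rw [← hf, ← h2, hadj]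
    simp [CFIGraph, SimpleGraph.fromRel_adj]
  have ha : y0 = a := by simpa [CFIGraph, SimpleGraph.fromRel_adj] using hA
  have hb : y1 = b := by simpa [CFIGraph, SimpleGraph.fromRel_adj] using hB
  have hc : (y2 = 0 ∧ a = b) ∨ (y2 = 1 ∧ a ≠ b) := by
    simpa [CFIGraph, SimpleGraph.fromRel_adj] using hC
  subst ha hb
  have hU : (univ : Finset (Fin 3)) = {0, 1, 2} := rfl
  have two : ∀ x : Fin 2, x = 0 ∨ x = 1 := by decide
  rcases two y0 with rfl | rfl <;> rcases two y1 with rfl | rfl <;>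
      rcases two y2 with rfl | rfl <;>
    first
      | (exfalso; revert hc; decide)
      | (rw [hU]
         simp only [Prod.mk_zero_zero] at h0
         simp [Finset.filter_insert, Finset.filter_singleton, Prod.mk_zero_zero, h0, h1, h2, Prod.ext_iff])
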